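/- Let n ≥ 2, let a > 0 be a real number, and let P be a real polynomial in the n+1 variables X₀, …, Xₙ (an element of MvPolynomial (Fin (n+1)) ℝ). If P(x) = 0 for every point x ∈ ℝ^{n+1} satisfying x₀² + x₁² + ⋯ + xₙ² = a, then the polynomial X₀² + X₁² + ⋯ + Xₙ² − a divides P in the polynomial ring MvPolynomial (Fin (n+1)) ℝ. -/

import Mathlib

set_option maxHeartbeats 1000000

open MvPolynomial

lemma vanish_cube : ∀ (n : ℕ) (p : MvPolynomial (Fin n) ℝ) (S : Fin n → Set ℝ),
    (∀ i, (S i).Infinite) →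
    (∀ x : Fin n → ℝ, (∀ i, x i ∈ S i) → eval x p = 0) → p = 0 := by
  intro n
  induction n with
  | zero =>
    intro p S hS h
    have h0 := h (fun i => i.elim0) (fun i => i.elim0)
    rw [eq_C_of_isEmpty p] at h0 ⊢
    rw [eval_C] at h0
    rw [h0, map_zero]
  | succ n ih =>
    intro p S hS h
    have key : ∀ k, (finSuccEquiv ℝ n p).coeff k = 0 := by
      intro k
      apply ih _ (fun i => S i.succ) (fun i => hS i.succ)
      intro y hy
      have hq : Polynomial.map (eval y) (finSuccEquiv ℝ n p) = 0 := by
        apply Polynomial.eq_zero_of_infinite_isRoot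
        apply (hS 0).mono
        intro t ht
        show Polynomial.IsRoot _ t
        rw [Polynomial.IsRoot, ← eval_eq_eval_mv_eval']
        apply h
        intro i
        refine Fin.cases ?_ ?_ i
        · simpa using ht
        · intro j; simpa using hy j
      rw [← coeff_eval_eq_eval_coeff, hq, Polynomial.coeff_zero]
    have hz : finSuccEquiv ℝ n p = 0 := Polynomial.ext fun k => by
      rw [key k, Polynomial.coeff_zero]
    exact (map_eq_zero_iff _ (finSuccEquiv ℝ n).injective).mp hz

theorem vanishing_on_sphere_divisible (n : ℕ) (hn : 2 ≤ n) (a : ℝ) (ha : 0 < a)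
    (P : MvPolynomial (Fin (n + 1)) ℝ)
    (hvan : ∀ x : Fin (n + 1) → ℝ, (∑ i, x i ^ 2) = a → eval x P = 0) :
    ((∑ i : Fin (n + 1), (X i : MvPolynomial (Fin (n + 1)) ℝ) ^ 2) - C a) ∣ P := by
  set e := finSuccEquiv ℝ n with he
  set c : MvPolynomial (Fin n) ℝ := (∑ i : Fin n, X i ^ 2) - C a with hc
  set Sp : MvPolynomial (Fin (n + 1)) ℝ :=
    (∑ i : Fin (n + 1), (X i : MvPolynomial (Fin (n + 1)) ℝ) ^ 2) - C a with hSp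
  have hCa : e (C a) = Polynomial.C (C a) := by
    simp [he, finSuccEquiv_apply]
  have heS : e Sp = Polynomial.X ^ 2 + Polynomial.C c := by
    simp only [hSp, hc, map_sub, map_add, map_sum, map_pow, hCa, Fin.sum_univ_succ, he,
      finSuccEquiv_X_zero, finSuccEquiv_X_succ]
    rw [← he, hCa]
    ring
  have hmon : (Polynomial.X ^ 2 + Polynomial.C c).Monic := by
    exact Polynomial.monic_X_pow_add_C (a := c) (n := 2) (by norm_num)
  set R := (e P) %ₘ (Polynomial.X ^ 2 + Polynomial.C c) with hR
  set Q := (e P) /ₘ (Polynomial.X ^ 2 + Polynomial.C c) with hQ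
  have hdecomp : R + (Polynomial.X ^ 2 + Polynomial.C c) * Q = e P :=
    Polynomial.modByMonic_add_div _ _
  have hdegR1 : R.degree ≤ 1 := by
    have h2 : (Polynomial.X ^ 2 + Polynomial.C c).degree = 2 := by
      simpa using Polynomial.degree_X_pow_add_C (by norm_num : 0 < 2) c
    have := Polynomial.degree_modByMonic_lt (e P) hmon
    rw [h2] at this
    exact Order.le_of_lt_succ (by exact_mod_cast this)
  have hRform : R = Polynomial.C (R.coeff 1) * Polynomial.X + Polynomial.C (R.coeff 0) :=
    Polynomial.eq_X_add_C_of_degree_le_one hdegR1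
  have hevalR : ∀ y : Fin n → ℝ, (∑ i, y i ^ 2) < a →
      eval y (R.coeff 0) = 0 ∧ eval y (R.coeff 1) = 0 := by
    intro y hy
    set t := Real.sqrt (a - ∑ i, y i ^ 2) with ht
    have ht2 : t ^ 2 = a - ∑ i, y i ^ 2 := Real.sq_sqrt (by linarith)
    have htpos : 0 < t := Real.sqrt_pos.mpr (by linarith)
    have hcy : eval y c = -(t ^ 2) := by
      rw [hc, map_sub, map_sum, eval_C]
      simp only [map_pow, eval_X]
      linarith
    have hroot : ∀ s : ℝ, s ^ 2 = t ^ 2 →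
        eval y (R.coeff 1) * s + eval y (R.coeff 0) = 0 := by
      intro s hs
      have hx : eval (Fin.cons s y) P = 0 := by
        apply hvan
        rw [Fin.sum_univ_succ]
        simp only [Fin.cons_zero, Fin.cons_succ]
        rw [hs]; linarith
      have hev := eval_eq_eval_mv_eval' y s P
      rw [hx] at hev
      have hmap : Polynomial.map (eval y) (e P) =
          Polynomial.map (eval y) R +
          Polynomial.map (eval y) (Polynomial.X ^ 2 + Polynomial.C c) *
            Polynomial.map (eval y) Q := by
        rw [← Polynomial.map_mul, ← Polynomial.map_add, hdecomp]
      have hz : Polynomial.eval s (Polynomial.map (eval y) (e P)) = 0 := hev.symm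
      rw [hmap] at hz
      rw [hRform] at hz
      simp only [Polynomial.map_add, Polynomial.map_mul, Polynomial.map_pow, Polynomial.map_C,
        Polynomial.map_X, Polynomial.eval_add, Polynomial.eval_mul, Polynomial.eval_pow,
        Polynomial.eval_C, Polynomial.eval_X, hcy, hs] at hz
      linarith [hz]
    have h1 := hroot t rfl
    have h2 := hroot (-t) (by ring)
    constructor
    · nlinarith
    · have : eval y (R.coeff 1) * (2 * t) = 0 := by linarith
      rcases mul_eq_zero.mp this with h | h
      · exact h
      · linarith
  -- choose a cube inside the open ball
  set δ := Real.sqrt (a / (n + 1)) with hδ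
  have hδpos : 0 < δ := Real.sqrt_pos.mpr (by positivity)
  have hδ2 : δ ^ 2 = a / (n + 1) := Real.sq_sqrt (by positivity)
  have hcube : ∀ k ∈ ({0, 1} : Set ℕ), R.coeff k = 0 := by
    intro k hk
    apply vanish_cube n _ (fun _ => Set.Ioo (-δ) δ)
      (fun _ => Set.Ioo_infinite (by linarith))
    intro y hyy
    have hsum : (∑ i, y i ^ 2) < a := by
      have hb : ∀ i, y i ^ 2 < δ ^ 2 := by
        intro i
        have := hyy i
        rw [Set.mem_Ioo] at this
        nlinarith [this.1, this.2]
      calc (∑ i, y i ^ 2) < ∑ _i : Fin n, δ ^ 2 :=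
            Finset.sum_lt_sum_of_nonempty
              (Finset.univ_nonempty_iff.mpr (Fin.pos_iff_nonempty.mp (by omega)))
              (fun i _ => hb i)
        _ = n * δ ^ 2 := by simp [mul_comm]
        _ = n * (a / (n + 1)) := by rw [hδ2]
        _ < a := by
            rw [div_eq_mul_inv]
            have hn1 : (0:ℝ) < (n:ℝ) + 1 := by positivity
            rw [mul_comm (a) _, ← mul_assoc]
            calc (n:ℝ) * ((n:ℝ)+1)⁻¹ * a < 1 * a := by
                  apply mul_lt_mul_of_pos_right _ ha
                  rw [mul_inv_lt_iff₀ hn1]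
                  linarith
              _ = a := one_mul a
    rcases hk with rfl | hk
    · exact (hevalR y hsum).1
    · rcases hk with rfl
      exact (hevalR y hsum).2
  have hR0 : R = 0 := by
    rw [hRform, hcube 0 (by simp), hcube 1 (by simp)]
    simp
  have hfact : e P = e Sp * Q := by
    rw [heS, ← hdecomp, hR0, zero_add]
  refine ⟨e.symm Q, ?_⟩
  have := congrArg e.symm hfact
  rw [e.symm_apply_apply, map_mul, e.symm_apply_apply] at this
  exact this
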